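/- Let K be a field and q ∈ K an element that is not a root of unity. In the quantum plane B = B(q), consider the left ideals I = B(ab−1)(a−1) ⊆ J = B(a−1), and set M = B/I и V = J/I. Then M is an essential extension of its submodule V, i.e., every nonzero B-submodule of M intersects V nontrivially. -/

import Mathlib

noncomputable section

open FreeAlgebra

/-- Defining relation of the quantum plane `B(q)`: `a * b = q • (b * a)`, where
`ι K 0` plays the role of `a` and `ι K 1` plays the role of `b`. -/
inductive QuantumPlaneRel (K : Type) [Field K] (q : K) :
    FreeAlgebra K (Fin 2) → FreeAlgebra K (Fin 2) → Prop
  | rel : QuantumPlaneRel K q (ι K (0 : Fin 2) * ι K (1 : Fin 2))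
      (q • (ι K (1 : Fin 2) * ι K (0 : Fin 2)))

/-- The coordinate algebra of the quantum plane `B(q)`. -/
abbrev QuantumPlane (K : Type) [Field K] (q : K) : Type :=
  RingQuot (QuantumPlaneRel K q)

/-- The generator `a` of the quantum plane. -/
def QuantumPlane.a (K : Type) [Field K] (q : K) : QuantumPlane K q :=
  RingQuot.mkAlgHom K (QuantumPlaneRel K q) (ι K (0 : Fin 2))

/-- The generator `b` of the quantum plane. -/
def QuantumPlane.b (K : Type) [Field K] (q : K) : QuantumPlane K q :=
  RingQuot.mkAlgHom K (QuantumPlaneRel K q) (ι K (1 : Fin 2))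

namespace QP

variable (K : Type) [Field K] (q : K)

local notation "α" => QuantumPlane.a K q
local notation "β" => QuantumPlane.b K q
local notation "Bq" => QuantumPlane K q

lemma rel1 : α * β = q • (β * α) := by
  have := RingQuot.mkAlgHom_rel K (QuantumPlaneRel.rel (K := K) (q := q))
  simpa [QuantumPlane.a, QuantumPlane.b, map_mul, map_smul] using this

/-- the defining element of I -/
def w : Bq := (α * β - 1) * (α - 1)

/-- `I = B w` -/
def Iw : Ideal Bq := Ideal.span {w K q}

/-- `J = B (a-1)` -/
def Jw : Ideal Bq := Ideal.span {α - 1}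

lemma I_le_J : Iw K q ≤ Jw K q := by
  rw [Iw, Ideal.span_le, Set.singleton_subset_iff]
  exact Submodule.smul_mem _ (α * β - 1) (Submodule.mem_span_singleton_self _)

lemma bcomm (i : ℕ) : (β)^i * (α * β) = q • ((β)^(i+1) * α) := by
  rw [rel1, mul_smul_comm, ← mul_assoc, ← pow_succ]

lemma pow_comm (m : ℕ) : (α)^m * β = q^m • (β * (α)^m) := by
  induction m with
  | zero => simp
  | succ m ih =>
    have : (α)^(m+1) * β = α * ((α)^m * β) := by
      rw [← mul_assoc, ← pow_succ']
    rw [this, ih, mul_smul_comm, ← mul_assoc, rel1, smul_mul_assoc, ← smul_assoc,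
      mul_assoc, ← pow_succ']
    rw [smul_eq_mul, ← pow_succ]

lemma w_eq : w K q = α * β * α - α * β - α + 1 := by
  rw [w, sub_mul, mul_sub, mul_sub, mul_one, mul_one, one_mul]; abel

lemma identity1 (i : ℕ) :
    (β)^i * w K q = q • ((β)^(i+1) * (α)^2) - q • ((β)^(i+1) * α) - (β)^i * α + (β)^i := by
  have h1 : (β)^i * (α * β * α) = q • ((β)^(i+1) * (α)^2) := by
    rw [← mul_assoc, bcomm, smul_mul_assoc, mul_assoc, ← pow_two]
  rw [w_eq, mul_add, mul_sub, mul_sub, mul_one, h1, bcomm]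


lemma identity2 (j : ℕ) :
    (α)^j * w K q = q^(j+1) • (β * (α)^(j+2)) - q^(j+1) • (β * (α)^(j+1)) - (α)^(j+1) + (α)^j := by
  have h2 : (α)^j * (α * β) = q^(j+1) • (β * (α)^(j+1)) := by
    rw [← mul_assoc, ← pow_succ, pow_comm]
  have h1 : (α)^j * (α * β * α) = q^(j+1) • (β * (α)^(j+2)) := by
    rw [← mul_assoc, h2, smul_mul_assoc, mul_assoc, ← pow_succ]
  rw [w_eq, mul_add, mul_sub, mul_sub, h1, h2, ← pow_succ, mul_one]

lemma pow_sub_one_mem (j : ℕ) : (α)^j - 1 ∈ Jw K q := by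
  induction j with
  | zero => simp
  | succ j ih =>
    have h : (α)^(j+1) - 1 = α * ((α)^j - 1) + (α - 1) := by
      rw [mul_sub, mul_one, ← pow_succ']; abel
    rw [h]
    exact add_mem (Ideal.mul_mem_left _ _ ih) (Submodule.mem_span_singleton_self _)

lemma ideal_smul_mem (I : Ideal (Bq)) (c : K) {z : Bq} (hz : z ∈ I) : c • z ∈ I := by
  rw [Algebra.smul_def]
  exact Ideal.mul_mem_left _ _ hz

/-! ### The model `W` -/

abbrev Idx : Type := ℕ ⊕ (ℕ ⊕ ℕ)

abbrev W := Idx →₀ K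

def e (j : ℕ) : W K := Finsupp.single (Sum.inl j) 1
def f (i : ℕ) : W K := Finsupp.single (Sum.inr (Sum.inl i)) 1
def g (i : ℕ) : W K := Finsupp.single (Sum.inr (Sum.inr i)) 1

def Aval : Idx → W K
  | Sum.inl j => e K (j+1)
  | Sum.inr (Sum.inl i) => q^(i+1) • g K i
  | Sum.inr (Sum.inr 0) => q • g K 0 + e K 1 - e K 0
  | Sum.inr (Sum.inr (i+1)) => q^(i+2) • g K (i+1) + q^(i+1) • g K i - q^(i+1) • f K i

def bet : ℕ → W K
  | 0 => f K 0
  | 1 => g K 0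
  | (j+2) => bet (j+1) + (q^(j+1))⁻¹ • e K (j+1) - (q^(j+1))⁻¹ • e K j

def Bval : Idx → W K
  | Sum.inl j => bet K q j
  | Sum.inr (Sum.inl i) => f K (i+1)
  | Sum.inr (Sum.inr i) => g K (i+1)

def Amap : W K →ₗ[K] W K :=
  Finsupp.lsum K fun a => LinearMap.toSpanSingleton K (W K) (Aval K q a)

def Bmap : W K →ₗ[K] W K :=
  Finsupp.lsum K fun a => LinearMap.toSpanSingleton K (W K) (Bval K q a)

lemma Amap_single (a : Idx) (c : K) :
    Amap K q (Finsupp.single a c) = c • Aval K q a := by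
  rw [Amap, Finsupp.lsum_single, LinearMap.toSpanSingleton_apply]

lemma Bmap_single (a : Idx) (c : K) :
    Bmap K q (Finsupp.single a c) = c • Bval K q a := by
  rw [Bmap, Finsupp.lsum_single, LinearMap.toSpanSingleton_apply]

lemma Amap_e (j : ℕ) : Amap K q (e K j) = e K (j+1) := by
  rw [e, Amap_single, one_smul]; rfl

lemma Amap_f (i : ℕ) : Amap K q (f K i) = q^(i+1) • g K i := by
  rw [f, Amap_single, one_smul]; rfl

lemma Amap_g (i : ℕ) : Amap K q (g K i) = Aval K q (Sum.inr (Sum.inr i)) := by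
  rw [g, Amap_single, one_smul]

lemma Bmap_e (j : ℕ) : Bmap K q (e K j) = bet K q j := by
  rw [e, Bmap_single, one_smul]; rfl

lemma Bmap_f (i : ℕ) : Bmap K q (f K i) = f K (i+1) := by
  rw [f, Bmap_single, one_smul]; rfl

lemma Bmap_g (i : ℕ) : Bmap K q (g K i) = g K (i+1) := by
  rw [g, Bmap_single, one_smul]; rfl

variable {q} in
lemma A_bet (hq0 : q ≠ 0) (j : ℕ) : Amap K q (bet K q j) = q • bet K q (j+1) := by
  induction j with
  | zero => rw [show bet K q 0 = f K 0 from rfl, Amap_f, pow_one]; rfl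
  | succ j ih =>
    match j, ih with
    | 0, _ =>
      rw [show bet K q 1 = g K 0 from rfl, Amap_g]
      show q • g K 0 + e K 1 - e K 0 = q • bet K q 2
      rw [show bet K q 2 = bet K q 1 + (q^(0+1))⁻¹ • e K 1 - (q^(0+1))⁻¹ • e K 0 from rfl]
      rw [show bet K q 1 = g K 0 from rfl]
      simp [smul_sub, smul_add, smul_smul, mul_inv_cancel₀ hq0]
    | (j+1), ih =>
      rw [show bet K q (j+2) = bet K q (j+1) + (q^(j+1))⁻¹ • e K (j+1) - (q^(j+1))⁻¹ • e K j
        from rfl]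
      rw [map_sub, map_add, map_smul, map_smul, Amap_e, Amap_e, ih]
      rw [show bet K q (j+3) = bet K q (j+2) + (q^(j+2))⁻¹ • e K (j+2) - (q^(j+2))⁻¹ • e K (j+1)
        from rfl]
      have hs : q * (q^(j+2))⁻¹ = (q^(j+1))⁻¹ := by
        rw [pow_succ']
        field_simp
      rw [smul_sub, smul_add, smul_smul, smul_smul, hs]

variable {q} in
lemma AB_rel (hq0 : q ≠ 0) (a : Idx) :
    Amap K q (Bval K q a) = q • Bmap K q (Aval K q a) := by
  match a with
  | Sum.inl j =>
    show Amap K q (bet K q j) = q • Bmap K q (e K (j+1))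
    rw [Bmap_e, A_bet K hq0]
  | Sum.inr (Sum.inl i) =>
    show Amap K q (f K (i+1)) = q • Bmap K q (q^(i+1) • g K i)
    rw [Amap_f, map_smul, Bmap_g, smul_smul, ← pow_succ']
  | Sum.inr (Sum.inr 0) =>
    show Amap K q (g K 1) = q • Bmap K q (q • g K 0 + e K 1 - e K 0)
    rw [Amap_g, map_sub, map_add, map_smul, Bmap_g, Bmap_e, Bmap_e]
    rw [show bet K q 1 = g K 0 from rfl, show bet K q 0 = f K 0 from rfl]
    show q^2 • g K 1 + q^1 • g K 0 - q^1 • f K 0 = _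
    rw [smul_sub, smul_add, smul_smul, ← pow_two, pow_one]
  | Sum.inr (Sum.inr (i+1)) =>
    show Amap K q (g K (i+2)) = q • Bmap K q
      (q^(i+2) • g K (i+1) + q^(i+1) • g K i - q^(i+1) • f K i)
    rw [Amap_g, map_sub, map_add, map_smul, map_smul, map_smul, Bmap_g, Bmap_g, Bmap_f]
    show q^(i+3) • g K (i+2) + q^(i+2) • g K (i+1) - q^(i+2) • f K (i+1) = _
    simp only [smul_sub, smul_add, smul_smul, ← pow_succ']


/-! ### The representation -/

variable {q} in
lemma AB_end (hq0 : q ≠ 0) : Amap K q * Bmap K q = q • (Bmap K q * Amap K q) := by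
  apply Finsupp.lhom_ext
  intro a c
  rw [Module.End.mul_apply, LinearMap.smul_apply, Module.End.mul_apply, Amap_single,
    Bmap_single, map_smul, map_smul, AB_rel K hq0, smul_comm]

variable {q} in
def rho (hq0 : q ≠ 0) : Bq →ₐ[K] Module.End K (W K) :=
  RingQuot.liftAlgHom K ⟨FreeAlgebra.lift K ![Amap K q, Bmap K q], by
    intro x y h
    cases h
    simp only [map_mul, map_smul, FreeAlgebra.lift_ι_apply, Matrix.cons_val_zero,
      Matrix.cons_val_one, Matrix.head_cons]
    exact AB_end K hq0⟩

variable {q} in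
lemma rho_a (hq0 : q ≠ 0) : rho K hq0 α = Amap K q := by
  rw [QuantumPlane.a, rho, RingQuot.liftAlgHom_mkAlgHom_apply, FreeAlgebra.lift_ι_apply]
  rfl

variable {q} in
lemma rho_b (hq0 : q ≠ 0) : rho K hq0 β = Bmap K q := by
  rw [QuantumPlane.b, rho, RingQuot.liftAlgHom_mkAlgHom_apply, FreeAlgebra.lift_ι_apply]
  rfl

/-! ### The section `σ` -/

def sval : Idx → Bq
  | Sum.inl j => (α)^j
  | Sum.inr (Sum.inl i) => (β)^(i+1)
  | Sum.inr (Sum.inr i) => (β)^(i+1) * α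

def sig : W K →ₗ[K] Bq :=
  Finsupp.lsum K fun a => LinearMap.toSpanSingleton K (Bq) (sval K q a)

lemma sig_single (a : Idx) (c : K) :
    sig K q (Finsupp.single a c) = c • sval K q a := by
  rw [sig, Finsupp.lsum_single, LinearMap.toSpanSingleton_apply]

lemma sig_e (j : ℕ) : sig K q (e K j) = (α)^j := by rw [e, sig_single, one_smul]; rfl
lemma sig_f (i : ℕ) : sig K q (f K i) = (β)^(i+1) := by rw [f, sig_single, one_smul]; rfl
lemma sig_g (i : ℕ) : sig K q (g K i) = (β)^(i+1) * α := by rw [g, sig_single, one_smul]; rfl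

lemma comm2 (m : ℕ) : α * (β)^m = q^m • ((β)^m * α) := by
  induction m with
  | zero => simp
  | succ m ih =>
    rw [pow_succ', ← mul_assoc, rel1, smul_mul_assoc, mul_assoc, ih, mul_smul_comm,
      smul_smul, ← mul_assoc, ← pow_succ', ← pow_succ']

lemma alpha_case (a : Idx) :
    α * sval K q a - sig K q (Aval K q a) ∈ Iw K q := by
  match a with
  | Sum.inl j =>
    show α * (α)^j - sig K q (e K (j+1)) ∈ Iw K q
    rw [sig_e, ← pow_succ', sub_self]
    exact zero_mem _
  | Sum.inr (Sum.inl i) =>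
    show α * (β)^(i+1) - sig K q (q^(i+1) • g K i) ∈ Iw K q
    rw [map_smul, sig_g, comm2, sub_self]
    exact zero_mem _
  | Sum.inr (Sum.inr 0) =>
    show α * ((β)^1 * α) - sig K q (q • g K 0 + e K 1 - e K 0) ∈ Iw K q
    have heq : α * ((β)^1 * α) - sig K q (q • g K 0 + e K 1 - e K 0) = w K q := by
      rw [map_sub, map_add, map_smul, sig_g, sig_e, sig_e, pow_one, pow_one, pow_zero,
        w_eq, ← mul_assoc, rel1, smul_mul_assoc]
      abel
    rw [heq]
    exact Submodule.mem_span_singleton_self _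
  | Sum.inr (Sum.inr (i+1)) =>
    show α * ((β)^(i+2) * α) -
      sig K q (q^(i+2) • g K (i+1) + q^(i+1) • g K i - q^(i+1) • f K i) ∈ Iw K q
    have heq : α * ((β)^(i+2) * α) -
        sig K q (q^(i+2) • g K (i+1) + q^(i+1) • g K i - q^(i+1) • f K i)
        = q^(i+1) • ((β)^(i+1) * w K q) := by
      rw [map_sub, map_add, map_smul, map_smul, map_smul, sig_g, sig_g, sig_f,
        identity1, ← mul_assoc, comm2, smul_mul_assoc, mul_assoc, ← pow_two]
      have hp : q^(i+1) * q = q^(i+2) := by ring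
      rw [smul_add, smul_sub, smul_sub, smul_smul, smul_smul, hp]
      abel
    rw [heq]
    exact ideal_smul_mem K q _ _ (Ideal.mul_mem_left _ _ (Submodule.mem_span_singleton_self _))

variable {q} in
lemma beta_bet (hq0 : q ≠ 0) (j : ℕ) :
    β * (α)^j - sig K q (bet K q j) ∈ Iw K q := by
  induction j with
  | zero =>
    rw [show bet K q 0 = f K 0 from rfl, sig_f, pow_zero, pow_one, mul_one, sub_self]
    exact zero_mem _
  | succ j ih =>
    match j, ih with
    | 0, _ =>
      rw [show bet K q 1 = g K 0 from rfl, sig_g, pow_one, pow_one, sub_self]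
      exact zero_mem _
    | (j+1), ih =>
      have hc : (q^(j+1))⁻¹ * q^(j+1) = 1 := inv_mul_cancel₀ (pow_ne_zero _ hq0)
      have heq : β * (α)^(j+2) - sig K q (bet K q (j+2))
          = (q^(j+1))⁻¹ • ((α)^j * w K q) + (β * (α)^(j+1) - sig K q (bet K q (j+1))) := by
        rw [show bet K q (j+2)
            = bet K q (j+1) + (q^(j+1))⁻¹ • e K (j+1) - (q^(j+1))⁻¹ • e K j from rfl]
        rw [map_sub, map_add, map_smul, map_smul, sig_e, sig_e, identity2,
          smul_add, smul_sub, smul_sub, smul_smul, smul_smul, hc, one_smul, one_smul]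
        abel
      rw [heq]
      refine add_mem (ideal_smul_mem K q _ _ ?_) ih
      exact Ideal.mul_mem_left _ _ (Submodule.mem_span_singleton_self _)

lemma beta_case (hq0 : q ≠ 0) (a : Idx) :
    β * sval K q a - sig K q (Bval K q a) ∈ Iw K q := by
  match a with
  | Sum.inl j => exact beta_bet K hq0 j
  | Sum.inr (Sum.inl i) =>
    show β * (β)^(i+1) - sig K q (f K (i+1)) ∈ Iw K q
    rw [sig_f, ← pow_succ', sub_self]
    exact zero_mem _
  | Sum.inr (Sum.inr i) =>
    show β * ((β)^(i+1) * α) - sig K q (g K (i+1)) ∈ Iw K q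
    rw [sig_g, ← mul_assoc, ← pow_succ', sub_self]
    exact zero_mem _

/-- linearization helper -/
lemma lin_case (L : W K →ₗ[K] W K) (t : Bq)
    (hbase : ∀ a : Idx, t * sval K q a - sig K q (L (Finsupp.single a 1)) ∈ Iw K q) :
    ∀ u : W K, t * sig K q u - sig K q (L u) ∈ Iw K q := by
  intro u
  induction u using Finsupp.induction with
  | zero => rw [map_zero, map_zero, map_zero, mul_zero, sub_self]; exact zero_mem _
  | single_add a c u' ha' hc ih =>
    have hsplit : t * sig K q (Finsupp.single a c + u') - sig K q (L (Finsupp.single a c + u'))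
        = (t * sig K q (Finsupp.single a c) - sig K q (L (Finsupp.single a c)))
          + (t * sig K q u' - sig K q (L u')) := by
      rw [map_add, map_add, map_add, mul_add]; abel
    rw [hsplit]
    refine add_mem ?_ ih
    have hsm : Finsupp.single a c = c • Finsupp.single a (1:K) := by
      rw [Finsupp.smul_single, smul_eq_mul, mul_one]
    rw [hsm, map_smul, map_smul, map_smul, sig_single, one_smul, mul_smul_comm]
    have hmem := ideal_smul_mem K q _ c (hbase a)
    rwa [smul_sub] at hmem


variable {q} in
/-- MAIN LEMMA: `x * σ(u) ≡ σ(ρ(x)(u))  mod I`. -/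
lemma main_C (hq0 : q ≠ 0) (x : Bq) :
    ∀ u : W K, x * sig K q u - sig K q (rho K hq0 x u) ∈ Iw K q := by
  obtain ⟨y, rfl⟩ := RingQuot.mkAlgHom_surjective K _ x
  induction y using FreeAlgebra.induction with
  | grade0 r =>
    intro u
    rw [AlgHom.commutes, AlgHom.commutes, Module.algebraMap_end_apply, map_smul,
      ← Algebra.smul_def, sub_self]
    exact zero_mem _
  | grade1 i =>
    fin_cases i
    · show ∀ u, α * sig K q u - sig K q (rho K hq0 α u) ∈ Iw K q
      rw [rho_a]
      refine lin_case K q (Amap K q) α fun a => ?_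
      rw [Amap_single, one_smul]
      exact alpha_case K q a
    · show ∀ u, β * sig K q u - sig K q (rho K hq0 β u) ∈ Iw K q
      rw [rho_b]
      refine lin_case K q (Bmap K q) β fun a => ?_
      rw [Bmap_single, one_smul]
      exact beta_case K q hq0 a
  | mul x y hx hy =>
    intro u
    set X := RingQuot.mkAlgHom K (QuantumPlaneRel K q) x
    set Y := RingQuot.mkAlgHom K (QuantumPlaneRel K q) y
    have heq : X * Y * sig K q u - sig K q (rho K hq0 (X * Y) u)
        = X * (Y * sig K q u - sig K q (rho K hq0 Y u))
          + (X * sig K q (rho K hq0 Y u) - sig K q (rho K hq0 X (rho K hq0 Y u))) := by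
      rw [map_mul, Module.End.mul_apply, mul_sub, mul_assoc]
      abel
    rw [map_mul, heq]
    exact add_mem (Ideal.mul_mem_left _ _ (hy u)) (hx (rho K hq0 Y u))
  | add x y hx hy =>
    intro u
    set X := RingQuot.mkAlgHom K (QuantumPlaneRel K q) x
    set Y := RingQuot.mkAlgHom K (QuantumPlaneRel K q) y
    have heq : (X + Y) * sig K q u - sig K q (rho K hq0 (X + Y) u)
        = (X * sig K q u - sig K q (rho K hq0 X u))
          + (Y * sig K q u - sig K q (rho K hq0 Y u)) := by
      rw [map_add, LinearMap.add_apply, map_add, add_mul]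
      abel
    rw [map_add, heq]
    exact add_mem (hx u) (hy u)

variable {q} in
def phi (hq0 : q ≠ 0) : Bq → W K := fun x => rho K hq0 x (e K 0)

variable {q} in
lemma x_sub_sig_phi (hq0 : q ≠ 0) (x : Bq) : x - sig K q (phi K hq0 x) ∈ Iw K q := by
  have h := main_C K hq0 x (e K 0)
  rwa [sig_e, pow_zero, mul_one] at h

variable {q} in
lemma phi_w (hq0 : q ≠ 0) : phi K hq0 (w K q) = 0 := by
  rw [phi, w, map_mul, Module.End.mul_apply, map_sub, map_sub, map_mul, map_one,
    rho_a, rho_b]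
  simp only [LinearMap.sub_apply, Module.End.one_apply, Module.End.mul_apply, Amap_e,
    map_sub, Bmap_e, show bet K q 1 = g K 0 from rfl, show bet K q 0 = f K 0 from rfl,
    Amap_g, Amap_f, Aval, zero_add, pow_one]
  abel

variable {q} in
lemma mem_I_phi (hq0 : q ≠ 0) {x : Bq} (hx : x ∈ Iw K q) : phi K hq0 x = 0 := by
  rw [Iw] at hx
  obtain ⟨c, rfl⟩ := Submodule.mem_span_singleton.mp hx
  rw [smul_eq_mul, phi, map_mul, Module.End.mul_apply]
  have : rho K hq0 (w K q) (e K 0) = 0 := phi_w K hq0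
  rw [this, map_zero]

/-! ### τ and η -/

def tval : Idx → (ℕ →₀ K)
  | Sum.inl _ => Finsupp.single 0 1
  | Sum.inr (Sum.inl i) => Finsupp.single (i+1) 1
  | Sum.inr (Sum.inr i) => Finsupp.single (i+1) 1

def tau : W K →ₗ[K] (ℕ →₀ K) :=
  Finsupp.lsum K fun a => LinearMap.toSpanSingleton K _ (tval K a)

lemma tau_single (a : Idx) (c : K) :
    tau K (Finsupp.single a c) = c • tval K a := by
  rw [tau, Finsupp.lsum_single, LinearMap.toSpanSingleton_apply]

def etaval : ℕ → Bq
  | 0 => 1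
  | (i+1) => (β)^(i+1)

def eta : (ℕ →₀ K) →ₗ[K] Bq :=
  Finsupp.lsum K fun n => LinearMap.toSpanSingleton K _ (etaval K q n)

lemma sig_sub_eta (u : W K) : sig K q u - eta K q (tau K u) ∈ Jw K q := by
  induction u using Finsupp.induction with
  | zero => rw [map_zero, map_zero, map_zero, sub_self]; exact zero_mem _
  | single_add a c u' ha' hc ih =>
    have hsplit : sig K q (Finsupp.single a c + u') - eta K q (tau K (Finsupp.single a c + u'))
        = (sig K q (Finsupp.single a c) - eta K q (tau K (Finsupp.single a c)))
          + (sig K q u' - eta K q (tau K u')) := by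
      rw [map_add, map_add, map_add]; abel
    rw [hsplit]
    refine add_mem ?_ ih
    rw [sig_single, tau_single, map_smul]
    have hmem : sval K q a - eta K q (tval K a) ∈ Jw K q := by
      match a with
      | Sum.inl j =>
        show (α)^j - eta K q (Finsupp.single 0 1) ∈ Jw K q
        rw [eta, Finsupp.lsum_single, LinearMap.toSpanSingleton_apply, one_smul]
        exact pow_sub_one_mem K q j
      | Sum.inr (Sum.inl i) =>
        show (β)^(i+1) - eta K q (Finsupp.single (i+1) 1) ∈ Jw K q
        rw [eta, Finsupp.lsum_single, LinearMap.toSpanSingleton_apply, one_smul]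
        show (β)^(i+1) - (β)^(i+1) ∈ Jw K q
        rw [sub_self]; exact zero_mem _
      | Sum.inr (Sum.inr i) =>
        show (β)^(i+1) * α - eta K q (Finsupp.single (i+1) 1) ∈ Jw K q
        rw [eta, Finsupp.lsum_single, LinearMap.toSpanSingleton_apply, one_smul]
        show (β)^(i+1) * α - (β)^(i+1) ∈ Jw K q
        have : (β)^(i+1) * α - (β)^(i+1) = (β)^(i+1) * (α - 1) := by
          rw [mul_sub, mul_one]
        rw [this]
        exact Ideal.mul_mem_left _ _ (Submodule.mem_span_singleton_self _)
    have h2 := ideal_smul_mem K q _ c hmem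
    rwa [smul_sub] at h2

lemma sig_mem_J_of_tau_eq_zero {u : W K} (h : tau K u = 0) : sig K q u ∈ Jw K q := by
  have h2 := sig_sub_eta K q u
  rwa [h, map_zero, sub_zero] at h2

/-! ### the diagonal operator `D` -/

def Dmap : (ℕ →₀ K) →ₗ[K] (ℕ →₀ K) :=
  Finsupp.lsum K fun n => LinearMap.toSpanSingleton K _ (q^n • Finsupp.single n 1)

lemma Dmap_single (n : ℕ) (c : K) :
    Dmap K q (Finsupp.single n c) = (c * q^n) • Finsupp.single n 1 := by
  rw [Dmap, Finsupp.lsum_single, LinearMap.toSpanSingleton_apply, smul_smul]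

lemma tau_Amap (u : W K) : tau K (Amap K q u) = Dmap K q (tau K u) := by
  have key : ∀ a : Idx, tau K (Aval K q a) = Dmap K q (tval K a) := by
    intro a
    match a with
    | Sum.inl j =>
      show tau K (e K (j+1)) = Dmap K q (Finsupp.single 0 1)
      rw [e, tau_single, one_smul, Dmap_single, pow_zero, mul_one, one_smul]
      rfl
    | Sum.inr (Sum.inl i) =>
      show tau K (q^(i+1) • g K i) = Dmap K q (Finsupp.single (i+1) 1)
      rw [map_smul, g, tau_single, one_smul, Dmap_single, one_mul]
      rfl
    | Sum.inr (Sum.inr 0) =>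
      show tau K (q • g K 0 + e K 1 - e K 0) = Dmap K q (Finsupp.single 1 1)
      rw [map_sub, map_add, map_smul, g, e, e, tau_single, tau_single, tau_single,
        one_smul, one_smul, one_smul, Dmap_single, one_mul, pow_one]
      show q • Finsupp.single 1 1 + Finsupp.single 0 1 - Finsupp.single 0 1 = _
      rw [add_sub_cancel_right]
    | Sum.inr (Sum.inr (i+1)) =>
      show tau K (q^(i+2) • g K (i+1) + q^(i+1) • g K i - q^(i+1) • f K i)
        = Dmap K q (Finsupp.single (i+2) 1)
      rw [map_sub, map_add, map_smul, map_smul, map_smul, g, g, f, tau_single, tau_single,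
        tau_single, one_smul, one_smul, one_smul, Dmap_single, one_mul]
      show q^(i+2) • Finsupp.single (i+2) (1:K) + q^(i+1) • Finsupp.single (i+1) 1
        - q^(i+1) • Finsupp.single (i+1) 1 = _
      rw [add_sub_cancel_right]
  induction u using Finsupp.induction with
  | zero => simp
  | single_add a c u' ha' hc ih =>
    rw [map_add, map_add, map_add, map_add, ih, Amap_single, tau_single, map_smul, map_smul,
      key a]


/-! ### coefficient extraction -/

lemma sum_coeff (u : Idx →₀ K) (F : Idx → K) (s : Finset Idx)
    (hs : ∀ a, a ∉ s → F a = 0) :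
    (u.sum fun a c => c * F a) = ∑ a ∈ s, u a * F a := by
  classical
  have h1 : ∑ a ∈ u.support, u a * F a = ∑ a ∈ u.support ∪ s, u a * F a :=
    Finset.sum_subset Finset.subset_union_left (fun x _ hx => by
      rw [Finsupp.notMem_support_iff.mp hx, zero_mul])
  have h2 : ∑ a ∈ s, u a * F a = ∑ a ∈ u.support ∪ s, u a * F a :=
    Finset.sum_subset Finset.subset_union_right (fun x _ hx => by rw [hs x hx, mul_zero])
  rw [Finsupp.sum, h1, ← h2]

lemma Amap_coeff (u : Idx →₀ K) (k : Idx) :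
    Amap K q u k = u.sum fun a c => c * (Aval K q a k) := by
  rw [Amap, Finsupp.lsum_apply, Finsupp.sum_apply]
  apply Finsupp.sum_congr
  intro a _
  rw [LinearMap.toSpanSingleton_apply, Finsupp.smul_apply, smul_eq_mul]

lemma coeffE0 (u : Idx →₀ K) :
    Amap K q u (Sum.inl 0) = - u (Sum.inr (Sum.inr 0)) := by
  classical
  rw [Amap_coeff, sum_coeff K u _ {Sum.inr (Sum.inr 0)} ?_]
  · simp [Aval, e, f, g, Finsupp.single_apply]
  · intro a ha
    match a with
    | Sum.inl j => simp [Aval, e, Finsupp.single_apply]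
    | Sum.inr (Sum.inl i) => simp [Aval, g, Finsupp.single_apply]
    | Sum.inr (Sum.inr 0) => simp at ha
    | Sum.inr (Sum.inr (i+1)) => simp [Aval, e, f, g, Finsupp.single_apply]

lemma coeffE1 (u : Idx →₀ K) :
    Amap K q u (Sum.inl 1) = u (Sum.inl 0) + u (Sum.inr (Sum.inr 0)) := by
  classical
  rw [Amap_coeff, sum_coeff K u _ {Sum.inl 0, Sum.inr (Sum.inr 0)} ?_]
  · simp [Aval, e, f, g, Finsupp.single_apply]
  · intro a ha
    simp only [Finset.mem_insert, Finset.mem_singleton, not_or] at ha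
    match a with
    | Sum.inl j =>
      have : j ≠ 0 := fun h => ha.1 (by rw [h])
      simp [Aval, e, Finsupp.single_apply]
      omega
    | Sum.inr (Sum.inl i) => simp [Aval, g, Finsupp.single_apply]
    | Sum.inr (Sum.inr 0) => exact absurd rfl ha.2
    | Sum.inr (Sum.inr (i+1)) => simp [Aval, e, f, g, Finsupp.single_apply]

lemma coeffEs (u : Idx →₀ K) (k : ℕ) :
    Amap K q u (Sum.inl (k+2)) = u (Sum.inl (k+1)) := by
  classical
  rw [Amap_coeff, sum_coeff K u _ {Sum.inl (k+1)} ?_]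
  · simp [Aval, e, f, g, Finsupp.single_apply]
  · intro a ha
    simp only [Finset.mem_singleton] at ha
    match a with
    | Sum.inl j =>
      have : j ≠ k+1 := fun h => ha (by rw [h])
      simp [Aval, e, Finsupp.single_apply]
      omega
    | Sum.inr (Sum.inl i) => simp [Aval, g, Finsupp.single_apply]
    | Sum.inr (Sum.inr 0) => simp [Aval, e, f, g, Finsupp.single_apply]
    | Sum.inr (Sum.inr (i+1)) => simp [Aval, e, f, g, Finsupp.single_apply]

lemma coeffF (u : Idx →₀ K) (i : ℕ) :
    Amap K q u (Sum.inr (Sum.inl i)) = -(q^(i+1) * u (Sum.inr (Sum.inr (i+1)))) := by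
  classical
  rw [Amap_coeff, sum_coeff K u _ {Sum.inr (Sum.inr (i+1))} ?_]
  · simp [Aval, e, f, g, Finsupp.single_apply]
    ring
  · intro a ha
    simp only [Finset.mem_singleton] at ha
    match a with
    | Sum.inl j => simp [Aval, e, Finsupp.single_apply]
    | Sum.inr (Sum.inl t) => simp [Aval, g, Finsupp.single_apply]
    | Sum.inr (Sum.inr 0) => simp [Aval, e, f, g, Finsupp.single_apply]
    | Sum.inr (Sum.inr (t+1)) =>
      have : t ≠ i := fun h => ha (by rw [h])
      simp [Aval, e, f, g, Finsupp.single_apply]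
      intro h
      omega

lemma coeffG (u : Idx →₀ K) (i : ℕ) :
    Amap K q u (Sum.inr (Sum.inr i)) = q^(i+1) * (u (Sum.inr (Sum.inl i))
      + u (Sum.inr (Sum.inr i)) + u (Sum.inr (Sum.inr (i+1)))) := by
  classical
  rw [Amap_coeff, sum_coeff K u _
    {Sum.inr (Sum.inl i), Sum.inr (Sum.inr i), Sum.inr (Sum.inr (i+1))} ?_]
  · have hv1 : Aval K q (Sum.inr (Sum.inl i)) (Sum.inr (Sum.inr i)) = q^(i+1) := by
      simp [Aval, g, Finsupp.single_apply]
    have hv2 : Aval K q (Sum.inr (Sum.inr i)) (Sum.inr (Sum.inr i)) = q^(i+1) := by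
      match i with
      | 0 => simp [Aval, e, f, g, Finsupp.single_apply]
      | (t+1) => simp [Aval, e, f, g, Finsupp.single_apply]
    have hv3 : Aval K q (Sum.inr (Sum.inr (i+1))) (Sum.inr (Sum.inr i)) = q^(i+1) := by
      simp [Aval, e, f, g, Finsupp.single_apply]
    rw [Finset.sum_insert (by simp), Finset.sum_insert (by simp), Finset.sum_singleton,
      hv1, hv2, hv3]
    ring
  · intro a ha
    simp only [Finset.mem_insert, Finset.mem_singleton, not_or] at ha
    match a with
    | Sum.inl j => simp [Aval, e, Finsupp.single_apply]
    | Sum.inr (Sum.inl t) =>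
      have : t ≠ i := fun h => ha.1 (by rw [h])
      simp [Aval, g, Finsupp.single_apply]
      omega
    | Sum.inr (Sum.inr 0) =>
      have h1 : (0:ℕ) ≠ i := fun h => ha.2.1 (by rw [h])
      have h2 : (0:ℕ) ≠ i+1 := fun h => ha.2.2 (by rw [h])
      simp [Aval, e, f, g, Finsupp.single_apply]
      omega
    | Sum.inr (Sum.inr (t+1)) =>
      have h1 : t+1 ≠ i := fun h => ha.2.1 (by rw [h])
      have h2 : t+1 ≠ i+1 := fun h => ha.2.2 (by rw [h])
      simp [Aval, e, f, g, Finsupp.single_apply]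
      rw [if_neg h1, if_neg (show ¬ t = i by omega), add_zero]


variable {q} in
lemma pow_inj (hq0 : q ≠ 0) (hq : ∀ k : ℕ, 0 < k → q ^ k ≠ 1) {m k : ℕ}
    (h : q^m = q^k) : m = k := by
  by_contra hne
  rcases Nat.lt_or_ge m k with hlt | hge
  · apply hq (k - m) (by omega)
    have h2 : q^m * q^(k-m) = q^m * 1 := by
      rw [mul_one, ← pow_add]
      rw [show m + (k - m) = k by omega, h]
    exact mul_left_cancel₀ (pow_ne_zero m hq0) h2
  · have hlt : k < m := by omega
    apply hq (m - k) (by omega)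
    have h2 : q^k * q^(m-k) = q^k * 1 := by
      rw [mul_one, ← pow_add]
      rw [show k + (m - k) = m by omega, ← h]
    exact mul_left_cancel₀ (pow_ne_zero k hq0) h2

/-- chain of nonzero coefficients gives infinite support, contradiction -/
lemma chain_false (u : Idx →₀ K) (F : ℕ → Idx) (hinj : Function.Injective F) (k0 : ℕ)
    (h0 : u (F k0) ≠ 0) (hstep : ∀ m, k0 ≤ m → u (F m) ≠ 0 → u (F (m+1)) ≠ 0) : False := by
  have hall : ∀ m, u (F (k0 + m)) ≠ 0 := by
    intro m
    induction m with
    | zero => simpa using h0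
    | succ m ih =>
      have := hstep (k0 + m) (by omega) ih
      rwa [show k0 + m + 1 = k0 + (m+1) by omega] at this
  have hinf : (↑u.support : Set Idx).Infinite := by
    apply Set.infinite_of_injective_forall_mem (f := fun m : ℕ => F (k0 + m))
    · intro m1 m2 hm
      have := hinj hm
      omega
    · intro m
      exact Finsupp.mem_support_iff.mpr (hall m)
  exact hinf (u.support.finite_toSet)

variable {q} in
lemma no_eigen (hq0 : q ≠ 0) (hq : ∀ k : ℕ, 0 < k → q ^ k ≠ 1) (n : ℕ) (u : W K)
    (h : Amap K q u = q^n • u) : u = 0 := by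
  have hk : ∀ k, Amap K q u k = q^n * u k := by
    intro k
    rw [h, Finsupp.smul_apply, smul_eq_mul]
  have hE0 : -(u (Sum.inr (Sum.inr 0))) = q^n * u (Sum.inl 0) := by
    rw [← coeffE0 K q u, hk]
  have hE1 : u (Sum.inl 0) + u (Sum.inr (Sum.inr 0)) = q^n * u (Sum.inl 1) := by
    rw [← coeffE1 K q u, hk]
  have hEs : ∀ k, u (Sum.inl (k+1)) = q^n * u (Sum.inl (k+2)) := by
    intro k; rw [← coeffEs K q u k, hk]
  have hF : ∀ i, -(q^(i+1) * u (Sum.inr (Sum.inr (i+1)))) = q^n * u (Sum.inr (Sum.inl i)) := by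
    intro i; rw [← coeffF K q u i, hk]
  have hG : ∀ i, q^(i+1) * (u (Sum.inr (Sum.inl i)) + u (Sum.inr (Sum.inr i))
      + u (Sum.inr (Sum.inr (i+1)))) = q^n * u (Sum.inr (Sum.inr i)) := by
    intro i; rw [← coeffG K q u i, hk]
  have hqn : q^n ≠ 0 := pow_ne_zero n hq0
  -- all `p (k+1)` vanish
  have hps : ∀ k, u (Sum.inl (k+1)) = 0 := by
    intro k
    by_contra hne
    refine chain_false K u (fun m => Sum.inl m) (fun a b hab => by simpa using hab)
      (k+1) hne ?_
    intro m hm hum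
    intro h0
    apply hum
    obtain ⟨k', rfl⟩ : ∃ k', m = k' + 1 := ⟨m - 1, by omega⟩
    show u (Sum.inl (k'+1)) = 0
    rw [hEs k']
    have h0' : u (Sum.inl (k'+2)) = 0 := h0
    rw [h0', mul_zero]
  -- `d i = 0` for `i ≥ n`
  have hdstep : ∀ m, u (Sum.inr (Sum.inr (m+1))) = 0 → q^(m+1) ≠ q^n →
      u (Sum.inr (Sum.inr m)) = 0 := by
    intro m hdm1 hmn
    have hc0 : u (Sum.inr (Sum.inl m)) = 0 := by
      have h2 := hF m
      rw [hdm1, mul_zero, neg_zero] at h2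
      exact (mul_eq_zero.mp h2.symm).resolve_left hqn
    have h2 : (q^(m+1) - q^n) * u (Sum.inr (Sum.inr m)) = 0 := by
      linear_combination hG m - q^(m+1) * hc0 - q^(m+1) * hdm1
    exact (mul_eq_zero.mp h2).resolve_left (sub_ne_zero_of_ne hmn)
  have hdtop : ∀ i, n ≤ i → u (Sum.inr (Sum.inr i)) = 0 := by
    intro i hi
    by_contra hne
    refine chain_false K u (fun m => Sum.inr (Sum.inr m))
      (fun a b hab => by simpa using hab) i hne ?_
    intro m hm hum h0
    refine hum (hdstep m h0 (fun hpow => ?_))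
    have := pow_inj K hq0 hq hpow
    omega
  -- bottom values
  have hd0 : u (Sum.inr (Sum.inr 0)) = 0 := by
    rcases Nat.eq_zero_or_pos n with hn | hn
    · exact hdtop 0 (by omega)
    · have h1 : u (Sum.inl 0) + u (Sum.inr (Sum.inr 0)) = 0 := by
        rw [hE1, hps 0, mul_zero]
      have h2 : (q^n - 1) * u (Sum.inl 0) = 0 := by linear_combination -hE0 - h1
      have h3 : u (Sum.inl 0) = 0 :=
        (mul_eq_zero.mp h2).resolve_left (sub_ne_zero_of_ne (hq n hn))
      linear_combination h1 - h3
  have hp0 : u (Sum.inl 0) = 0 := by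
    have h2 := hE0
    rw [hd0, neg_zero] at h2
    exact (mul_eq_zero.mp h2.symm).resolve_left hqn
  -- all d vanish
  have hdall : ∀ i, u (Sum.inr (Sum.inr i)) = 0 := by
    intro i
    induction i with
    | zero => exact hd0
    | succ i ih =>
      rcases Nat.lt_or_ge (i+1) n with hlt | hge
      · have h2 : q^(i+1) * (u (Sum.inr (Sum.inl i)) + u (Sum.inr (Sum.inr (i+1)))) = 0 := by
          linear_combination hG i - q^(i+1) * ih + q^n * ih
        have h3 : u (Sum.inr (Sum.inl i)) + u (Sum.inr (Sum.inr (i+1))) = 0 :=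
          (mul_eq_zero.mp h2).resolve_left (pow_ne_zero _ hq0)
        have h4 : (q^n - q^(i+1)) * u (Sum.inr (Sum.inr (i+1))) = 0 := by
          linear_combination hF i + q^n * h3
        refine (mul_eq_zero.mp h4).resolve_left (sub_ne_zero_of_ne ?_)
        intro hpow
        have := pow_inj K hq0 hq hpow
        omega
      · exact hdtop (i+1) hge
  have hcall : ∀ i, u (Sum.inr (Sum.inl i)) = 0 := by
    intro i
    have h2 := hF i
    rw [hdall (i+1), mul_zero, neg_zero] at h2
    exact (mul_eq_zero.mp h2.symm).resolve_left hqn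
  ext a
  rw [Finsupp.coe_zero, Pi.zero_apply]
  match a with
  | Sum.inl 0 => exact hp0
  | Sum.inl (k+1) => exact hps k
  | Sum.inr (Sum.inl i) => exact hcall i
  | Sum.inr (Sum.inr i) => exact hdall i


/-! ### final assembly -/

variable {q} in
lemma phi_a_mul (hq0 : q ≠ 0) (x : Bq) :
    phi K hq0 (α * x) = Amap K q (phi K hq0 x) := by
  rw [phi, phi, map_mul, Module.End.mul_apply, rho_a]

variable {q} in
lemma phi_alg_mul (hq0 : q ≠ 0) (c : K) (x : Bq) :
    phi K hq0 (algebraMap K (Bq) c * x) = c • phi K hq0 x := by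
  rw [phi, phi, map_mul, Module.End.mul_apply, AlgHom.commutes, Module.algebraMap_end_apply]

variable {q} in
lemma phi_sub (hq0 : q ≠ 0) (x y : Bq) :
    phi K hq0 (x - y) = phi K hq0 x - phi K hq0 y := by
  rw [phi, phi, phi, map_sub, LinearMap.sub_apply]

lemma Dmap_coeff (v : ℕ →₀ K) (k : ℕ) : Dmap K q v k = q^k * v k := by
  classical
  rw [Dmap, Finsupp.lsum_apply, Finsupp.sum_apply]
  rw [Finsupp.sum_eq_single k (fun b hb hbk => ?_) (fun h => ?_)]
  · rw [LinearMap.toSpanSingleton_apply, Finsupp.smul_apply, Finsupp.smul_apply,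
      Finsupp.single_apply, if_pos rfl, smul_eq_mul, smul_eq_mul, mul_one, mul_comm]
  · rw [LinearMap.toSpanSingleton_apply, Finsupp.smul_apply, Finsupp.smul_apply,
      Finsupp.single_apply, if_neg hbk, smul_eq_mul, smul_eq_mul, mul_zero, mul_zero]
  · rw [map_zero, Finsupp.coe_zero, Pi.zero_apply]

lemma mem_V_iff (x : Bq) :
    (Iw K q).mkQ x ∈ Submodule.map (Iw K q).mkQ (Jw K q) ↔ x ∈ Jw K q := by
  constructor
  · rintro ⟨j, hj, hjx⟩
    have h0 : (Iw K q).mkQ (j - x) = 0 := by rw [map_sub, hjx, sub_self]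
    rw [Submodule.mkQ_apply, Submodule.Quotient.mk_eq_zero] at h0
    have h1 : j - x ∈ Jw K q := I_le_J K q h0
    have h2 : x = j - (j - x) := by abel
    rw [h2]
    exact sub_mem hj h1
  · intro hx
    exact ⟨x, hx, rfl⟩

variable {q} in
lemma psi_zero_mem_J (hq0 : q ≠ 0) (x : Bq) (hpsi : tau K (phi K hq0 x) = 0) :
    x ∈ Jw K q := by
  have h1 := I_le_J K q (x_sub_sig_phi K hq0 x)
  have h2 := sig_mem_J_of_tau_eq_zero K q hpsi
  have h3 : x = (x - sig K q (phi K hq0 x)) + sig K q (phi K hq0 x) := by abel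
  rw [h3]
  exact add_mem h1 h2

variable {q} in
lemma final (hq0 : q ≠ 0) (hq : ∀ k : ℕ, 0 < k → q ^ k ≠ 1)
    (N : Submodule (Bq) ((Bq) ⧸ Iw K q))
    (hbot : N ⊓ Submodule.map (Iw K q).mkQ (Jw K q) = ⊥) : N = ⊥ := by
  classical
  by_contra hNne
  have mkQ_mul_mem : ∀ (r x : Bq), (Iw K q).mkQ x ∈ N → (Iw K q).mkQ (r * x) ∈ N := by
    intro r x h
    rw [← smul_eq_mul, map_smul]
    exact N.smul_mem r h
  set P : (ℕ →₀ K) → Prop :=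
    fun v => ∃ x : Bq, (Iw K q).mkQ x ∈ N ∧ tau K (phi K hq0 x) = v with hP
  by_cases hA : ∃ v, P v ∧ v ≠ 0
  · obtain ⟨v0, hPv0, hv0ne⟩ := hA
    have Pmul : ∀ v, P v → P (Dmap K q v) := by
      rintro v ⟨x, hx, rfl⟩
      exact ⟨α * x, mkQ_mul_mem α x hx, by rw [phi_a_mul, tau_Amap]⟩
    have Psmul : ∀ (c : K) v, P v → P (c • v) := by
      rintro c v ⟨x, hx, rfl⟩
      exact ⟨algebraMap K (Bq) c * x, mkQ_mul_mem _ x hx, by rw [phi_alg_mul, map_smul]⟩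
    have Psub : ∀ v1 v2, P v1 → P v2 → P (v1 - v2) := by
      rintro v1 v2 ⟨x1, hx1, rfl⟩ ⟨x2, hx2, rfl⟩
      exact ⟨x1 - x2, sub_mem hx1 hx2, by rw [phi_sub, map_sub]⟩
    have main : ∀ s : ℕ, ∀ v, P v → v ≠ 0 → v.support.card ≤ s →
        ∃ n : ℕ, P (Finsupp.single n 1) := by
      intro s
      induction s with
      | zero =>
        intro v _ hvne hcard
        exact absurd (Finsupp.support_eq_empty.mp
          (Finset.card_eq_zero.mp (le_antisymm hcard (Nat.zero_le _)))) hvne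
      | succ s ih =>
        intro v hPv hvne hcard
        obtain ⟨m, hm⟩ := Finset.Nonempty.exists_mem
          (Finsupp.support_nonempty_iff.mpr hvne)
        by_cases hone : v.support.card = 1
        · obtain ⟨a, ha1, ha2⟩ := Finsupp.card_support_eq_one.mp hone
          refine ⟨a, ?_⟩
          have h2 := Psmul (v a)⁻¹ v hPv
          have key : (v a)⁻¹ • v = Finsupp.single a 1 := by
            ext k
            rw [Finsupp.smul_apply, smul_eq_mul, Finsupp.single_apply]
            by_cases hk : a = k
            · subst hk
              rw [if_pos rfl, inv_mul_cancel₀ ha1]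
            · rw [if_neg hk]
              have hvk : v k = 0 := by
                conv_lhs => rw [ha2]
                rw [Finsupp.single_apply, if_neg hk]
              rw [hvk, mul_zero]
          rwa [key] at h2
        · set v' := Dmap K q v - q^m • v with hv'
          have hPv' : P v' := Psub _ _ (Pmul v hPv) (Psmul (q^m) v hPv)
          have hcoeff : ∀ k, v' k = (q^k - q^m) * v k := by
            intro k
            rw [hv', Finsupp.sub_apply, Finsupp.smul_apply, Dmap_coeff, smul_eq_mul]
            ring
          have hsub : v'.support ⊆ v.support \ {m} := by
            intro k hk
            rw [Finsupp.mem_support_iff] at hk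
            rw [Finset.mem_sdiff, Finset.mem_singleton, Finsupp.mem_support_iff]
            constructor
            · intro hvk
              exact hk (by rw [hcoeff, hvk, mul_zero])
            · intro hkm
              subst hkm
              exact hk (by rw [hcoeff, sub_self, zero_mul])
          have hcard2 : 1 < v.support.card := by
            have h1 : 0 < v.support.card := Finset.card_pos.mpr ⟨m, hm⟩
            omega
          obtain ⟨k0, hk0mem, hk0m⟩ := Finset.exists_mem_ne hcard2 m
          have hk0ne : v' k0 ≠ 0 := by
            rw [hcoeff]
            refine mul_ne_zero (sub_ne_zero_of_ne ?_) (Finsupp.mem_support_iff.mp hk0mem)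
            intro hpow
            exact hk0m (pow_inj K hq0 hq hpow)
          have hv'ne : v' ≠ 0 := by
            intro hz
            rw [hz] at hk0ne
            exact hk0ne rfl
          refine ih v' hPv' hv'ne ?_
          calc v'.support.card ≤ (v.support \ {m}).card := Finset.card_le_card hsub
            _ = v.support.card - 1 := by
                rw [Finset.card_sdiff_of_subset (Finset.singleton_subset_iff.mpr hm),
                  Finset.card_singleton]
            _ ≤ s := by omega
    obtain ⟨n, x, hxN, hxpsi⟩ := main v0.support.card v0 hPv0 hv0ne le_rfl
    set y := α * x - algebraMap K (Bq) (q^n) * x with hy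
    have hyN : (Iw K q).mkQ y ∈ N :=
      sub_mem (mkQ_mul_mem α x hxN) (mkQ_mul_mem _ x hxN)
    have hphiy : phi K hq0 y = Amap K q (phi K hq0 x) - q^n • phi K hq0 x := by
      rw [hy, phi_sub, phi_a_mul, phi_alg_mul]
    have hypsi : tau K (phi K hq0 y) = 0 := by
      rw [hphiy, map_sub, map_smul, tau_Amap, hxpsi, Dmap_single, one_mul, sub_self]
    have hyV : (Iw K q).mkQ y ∈ Submodule.map (Iw K q).mkQ (Jw K q) :=
      (mem_V_iff K q y).mpr (psi_zero_mem_J K hq0 y hypsi)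
    have hy0 : (Iw K q).mkQ y = 0 := by
      have hmem := Submodule.mem_inf.mpr ⟨hyN, hyV⟩
      rw [hbot] at hmem
      exact (Submodule.mem_bot _).mp hmem
    have hyI : y ∈ Iw K q := by
      rwa [Submodule.mkQ_apply, Submodule.Quotient.mk_eq_zero] at hy0
    have hphiy0 : phi K hq0 y = 0 := mem_I_phi K hq0 hyI
    have heig : Amap K q (phi K hq0 x) = q^n • phi K hq0 x := by
      rw [hphiy0] at hphiy
      exact (sub_eq_zero.mp hphiy.symm)
    have hphix : phi K hq0 x = 0 := no_eigen K hq0 hq n _ heig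
    rw [hphix, map_zero] at hxpsi
    exact one_ne_zero (Finsupp.single_eq_zero.mp hxpsi.symm)
  · apply hNne
    have hNV : N ≤ Submodule.map (Iw K q).mkQ (Jw K q) := by
      intro m hmN
      obtain ⟨x, rfl⟩ := Submodule.mkQ_surjective (Iw K q) m
      have hzero : tau K (phi K hq0 x) = 0 := by
        by_contra hne
        exact hA ⟨_, ⟨x, hmN, rfl⟩, hne⟩
      exact (mem_V_iff K q x).mpr (psi_zero_mem_J K hq0 x hzero)
    rw [← inf_eq_left.mpr hNV, hbot]

end QP

/-- In the quantum plane `B = B(q)` with `q` not a root of unity, with left ideals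
`I = B(ab-1)(a-1) ⊆ J = B(a-1)`, the module `M = B/I` is an essential extension of
its submodule `V = J/I` (the image of `J` in `B/I`): every nonzero `B`-submodule of
`M` intersects `V` nontrivially. -/
theorem quantumPlane_M_essential_extension (K : Type) [Field K] (q : K) (hq0 : q ≠ 0)
    (hq : ∀ k : ℕ, 0 < k → q ^ k ≠ 1) :
    ∀ N : Submodule (QuantumPlane K q)
      (QuantumPlane K q ⧸ (Ideal.span {(QuantumPlane.a K q * QuantumPlane.b K q - 1) *
        (QuantumPlane.a K q - 1)} : Ideal (QuantumPlane K q))),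
      N ≠ ⊥ →
      N ⊓ Submodule.map
        (Ideal.span {(QuantumPlane.a K q * QuantumPlane.b K q - 1) *
          (QuantumPlane.a K q - 1)} : Ideal (QuantumPlane K q)).mkQ
        (Ideal.span {QuantumPlane.a K q - 1} : Ideal (QuantumPlane K q)) ≠ ⊥ := by
  intro N hN hbot
  exact hN (QP.final K hq0 hq N hbot)

end
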